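/- The abelianization of the group G = ⟨a, b | a b a b^{-1} a^{-1} b a b = b a b a^{-1} b^{-1} a b a, (b a b^{-1} a^{-1} b^{-1} a b a^{-1})^n a^m = 1⟩ is isomorphic to ℤ ⊕ ℤ/mℤ, with the image of a generating the ℤ/mℤ summand; in particular, if m ≥ 2 then a ≠ 1 in G. -/

import Mathlib

def whiteheadRels (m n : ℕ) : Set (FreeGroup (Fin 2)) :=
  let a : FreeGroup (Fin 2) := FreeGroup.of 0
  let b : FreeGroup (Fin 2) := FreeGroup.of 1
  { (a * b * a * b⁻¹ * a⁻¹ * b * a * b) * (b * a * b * a⁻¹ * b⁻¹ * a * b * a)⁻¹,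
    (b * a * b⁻¹ * a⁻¹ * b⁻¹ * a * b * a⁻¹) ^ n * a ^ m }

def wfGen (m : ℕ) : Fin 2 → Multiplicative (ℤ × ZMod m) :=
  ![Multiplicative.ofAdd (0, 1), Multiplicative.ofAdd (1, 0)]

lemma wf_rels (m n : ℕ) : ∀ r ∈ whiteheadRels m n,
    FreeGroup.lift (wfGen m) r = 1 := by
  intro r hr
  simp only [whiteheadRels, Set.mem_insert_iff, Set.mem_singleton_iff] at hr
  rcases hr with rfl | rfl <;>
  · apply Multiplicative.toAdd.injective
    simp [wfGen, Prod.ext_iff, ← ofAdd_add, ZMod.natCast_self]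
    try abel_nf
    try simp [ZMod.natCast_self]

namespace WFaux

variable (m n : ℕ)

abbrev A (m n : ℕ) := Abelianization (PresentedGroup (whiteheadRels m n))

def aA : A m n := Abelianization.of (PresentedGroup.of 0)
def bA : A m n := Abelianization.of (PresentedGroup.of 1)

/-- forward hom -/
def φ : A m n →* Multiplicative (ℤ × ZMod m) :=
  Abelianization.lift (PresentedGroup.toGroup (wf_rels m n))

lemma φ_aA : φ m n (aA m n) = Multiplicative.ofAdd (0, 1) := by
  simp [φ, aA, wfGen]

lemma φ_bA : φ m n (bA m n) = Multiplicative.ofAdd (1, 0) := by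
  simp [φ, bA, wfGen]

/-- the projection FreeGroup → A -/
def π : FreeGroup (Fin 2) →* A m n :=
  (Abelianization.of (G := PresentedGroup (whiteheadRels m n))).comp
    (QuotientGroup.mk' (Subgroup.normalClosure (whiteheadRels m n)))

lemma π_rel {r : FreeGroup (Fin 2)} (hr : r ∈ whiteheadRels m n) : π m n r = 1 := by
  have : (QuotientGroup.mk r : PresentedGroup (whiteheadRels m n)) = 1 :=
    (QuotientGroup.eq_one_iff r).mpr (Subgroup.subset_normalClosure hr)
  show Abelianization.of (QuotientGroup.mk r : PresentedGroup (whiteheadRels m n)) = 1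
  rw [this, map_one]

lemma aA_pow : aA m n ^ m = 1 := by
  set a : FreeGroup (Fin 2) := FreeGroup.of 0 with ha
  set b : FreeGroup (Fin 2) := FreeGroup.of 1 with hb
  have h2 : (b * a * b⁻¹ * a⁻¹ * b⁻¹ * a * b * a⁻¹) ^ n * a ^ m ∈ whiteheadRels m n := by
    exact Set.mem_insert_of_mem _ (Set.mem_singleton _)
  have hrel := π_rel m n h2
  have hc : π m n (b * a * b⁻¹ * a⁻¹ * b⁻¹ * a * b * a⁻¹) = 1 := by
    simp only [map_mul, map_inv]
    set x := π m n a
    set y := π m n b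
    simp [mul_comm, mul_assoc, mul_left_comm]
  rw [map_mul, map_pow, map_pow, hc, one_pow, one_mul] at hrel
  have : π m n a = aA m n := rfl
  rwa [this] at hrel

/-- additive version of the inverse hom -/
def ψadd : ℤ × ZMod m →+ Additive (A m n) :=
  AddMonoidHom.coprod (zmultiplesHom _ (Additive.ofMul (bA m n)))
    (ZMod.lift m ⟨zmultiplesHom _ (Additive.ofMul (aA m n)), by
      have := aA_pow m n
      simpa [← ofMul_pow] using congrArg Additive.ofMul this⟩)

def ψ : Multiplicative (ℤ × ZMod m) →* A m n :=
  (MulEquiv.multiplicativeAdditive (A m n)).toMonoidHom.comp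
    (AddMonoidHom.toMultiplicative (ψadd m n))

lemma ψ_apply (z : Multiplicative (ℤ × ZMod m)) :
    ψ m n z = Additive.toMul (ψadd m n (Multiplicative.toAdd z)) := rfl

lemma ψ_b : ψ m n (Multiplicative.ofAdd (1, 0)) = bA m n := by
  rw [ψ_apply]
  simp only [toAdd_ofAdd, ψadd, AddMonoidHom.coprod_apply, map_zero, add_zero,
    zmultiplesHom_apply, one_zsmul, toMul_ofMul]

lemma ψ_a : ψ m n (Multiplicative.ofAdd (0, 1)) = aA m n := by
  rw [ψ_apply]
  have h1 : ((1 : ZMod m)) = ((1 : ℤ) : ZMod m) := by norm_cast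
  simp only [toAdd_ofAdd, ψadd, AddMonoidHom.coprod_apply, map_zero, zero_add, h1,
    ZMod.lift_coe, zmultiplesHom_apply, one_zsmul, toMul_ofMul]

lemma comp1 : (ψ m n).comp (φ m n) = MonoidHom.id (A m n) := by
  apply Abelianization.hom_ext
  apply PresentedGroup.ext
  intro x
  fin_cases x
  · show ψ m n (φ m n (aA m n)) = aA m n
    rw [φ_aA, ψ_a]
  · show ψ m n (φ m n (bA m n)) = bA m n
    rw [φ_bA, ψ_b]

lemma comp2 (hm : 2 ≤ m) : (φ m n).comp (ψ m n) =
    MonoidHom.id (Multiplicative (ℤ × ZMod m)) := by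
  haveI : NeZero m := ⟨by omega⟩
  apply MonoidHom.ext
  intro z
  have hz : z = (Multiplicative.ofAdd ((1 : ℤ), (0 : ZMod m))) ^ (Multiplicative.toAdd z).1 *
      (Multiplicative.ofAdd ((0 : ℤ), (1 : ZMod m))) ^ ((Multiplicative.toAdd z).2.val) := by
    apply Multiplicative.toAdd.injective
    simp [Prod.ext_iff, ZMod.natCast_rightInverse (Multiplicative.toAdd z).2]
  simp only [MonoidHom.comp_apply, MonoidHom.id_apply]
  conv_lhs => rw [hz]
  conv_rhs => rw [hz]
  simp only [map_mul, map_zpow, map_pow, ψ_a, ψ_b, φ_aA, φ_bA]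

def e (hm : 2 ≤ m) : A m n ≃* Multiplicative (ℤ × ZMod m) :=
  MonoidHom.toMulEquiv (φ m n) (ψ m n) (comp1 m n) (comp2 m n hm)

lemma e_a (hm : 2 ≤ m) : e m n hm (aA m n) = Multiplicative.ofAdd (0, 1) := φ_aA m n

end WFaux

/-- The abelianization of G is ℤ ⊕ ℤ/m, with the class of a mapping to a generator of
the ℤ/m summand (and trivial ℤ-coordinate); in particular a ≠ 1 in G when m ≥ 2. -/
theorem whitehead_filling_abelianization (m n : ℕ) (hm : 2 ≤ m) (hn : 1 ≤ n) :
    (∃ φ : Abelianization (PresentedGroup (whiteheadRels m n)) ≃*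
        Multiplicative (ℤ × ZMod m),
      (Multiplicative.toAdd
        (φ (Abelianization.of (PresentedGroup.of 0)))).1 = 0 ∧
      AddSubgroup.zmultiples (Multiplicative.toAdd
        (φ (Abelianization.of (PresentedGroup.of 0)))).2 = ⊤) ∧
    (PresentedGroup.of 0 : PresentedGroup (whiteheadRels m n)) ≠ 1 := by
  haveI : NeZero m := ⟨by omega⟩
  haveI : Fact (1 < m) := ⟨hm⟩
  have key : WFaux.e m n hm (WFaux.aA m n) = Multiplicative.ofAdd (0, 1) := WFaux.e_a m n hm
  constructor
  · refine ⟨WFaux.e m n hm, ?_, ?_⟩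
    · rw [show Abelianization.of (PresentedGroup.of 0) = WFaux.aA m n from rfl, key]
      rfl
    · rw [show Abelianization.of (PresentedGroup.of 0) = WFaux.aA m n from rfl, key]
      show AddSubgroup.zmultiples (1 : ZMod m) = ⊤
      ext x
      simp only [AddSubgroup.mem_zmultiples_iff, AddSubgroup.mem_top, iff_true]
      exact ⟨(x.val : ℤ), by rw [zsmul_one]; push_cast; exact ZMod.natCast_rightInverse x⟩
  · intro h
    have h1 : WFaux.e m n hm (WFaux.aA m n) = 1 := by
      rw [show WFaux.aA m n = Abelianization.of (PresentedGroup.of 0) from rfl, h, map_one,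
        map_one]
    rw [key] at h1
    have := congrArg (fun z => (Multiplicative.toAdd z).2) h1
    simpa using this
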